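/- (Lipschitz continuity ofint the optimality operator, Theorem 1.) Let S, A be nonempty finite sets, P : S × A → Δ(S) a transition kernel, γ ∈ (0,1), H ≥ 1, and let r : S × A × ℝ^H → ℝ satisfy |r(s,a,λ₁) − r(s,a,λ₂)| ≤ L_r·‖λ₁ − λ₂‖₁ for all s, a, λ₁, λ₂. Let ρ > 0 and let Ω : Δ(A) → ℝ be continuous and ρ-strongly convex with respect to the ℓ¹ norm on ℝ^A. For each λ and s define q_λ^s(a) = r(s,a,λ) + γ·∑_{s'} (max_{a'} Q_λ*(s',a'))·P(s'|s,a), where Q_λ* is the unique fixed point of the Bellman optimality operator for reward r(·,·,λ), and define the policy Γ₁(s,λ) = argmax_{π ∈ Δ(A)} (∑_a q_λ^s(a)·π(a) − Ω(π)), which is unique by strong convexity. Then for all λ₁, λ₂ ∈ ℝ^H, sup_{s∈S} ‖Γ₁(s,λ₁) − Γ₁(s,λ₂)‖₁ ≤ (1/ρ)·(L_r + γ·L_r/(1−γ))·‖λ₁ − λ₂‖₁. -/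

import Mathlib

open scoped BigOperators

/-- limit argument: X ≤ c*t for all small t>0 gives X ≤ 0. -/
lemma stmt7_aux_nonpos {X c : ℝ} (hc : 0 ≤ c) (h : ∀ t : ℝ, 0 < t → t ≤ 1 → X ≤ c * t) :
    X ≤ 0 := by
  by_contra hX
  push_neg at hX
  rcases eq_or_lt_of_le hc with hc0 | hc0
  · have := h 1 one_pos le_rfl
    rw [← hc0] at this
    linarith
  · have ht0 : 0 < min 1 (X / (2 * c)) :=
      lt_min one_pos (div_pos hX (by linarith))
    have := h _ ht0 (min_le_left _ _)
    have h2 : c * min 1 (X / (2 * c)) ≤ c * (X / (2 * c)) :=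
      mul_le_mul_of_nonneg_left (min_le_right _ _) hc
    have h3 : c * (X / (2 * c)) = X / 2 := by
      field_simp
    nlinarith

/-- strong-convexity maximizer gap. -/
lemma stmt7_sc {A : Type*} [Fintype A] {ρ : ℝ} (hρ : 0 < ρ) (Ω : (A → ℝ) → ℝ)
    (hΩ_sc : ∀ π π' : A → ℝ,
      π ∈ {p : A → ℝ | (∀ a, 0 ≤ p a) ∧ ∑ a, p a = 1} →
      π' ∈ {p : A → ℝ | (∀ a, 0 ≤ p a) ∧ ∑ a, p a = 1} →
      ∀ t ∈ Set.Icc (0 : ℝ) 1,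
        Ω (t • π + (1 - t) • π') ≤
          t * Ω π + (1 - t) * Ω π' - (ρ / 2) * t * (1 - t) * (∑ a, |π a - π' a|) ^ 2)
    (q₁ π₁ π₂ : A → ℝ)
    (hπ₁ : π₁ ∈ {p : A → ℝ | (∀ a, 0 ≤ p a) ∧ ∑ a, p a = 1})
    (hπ₂ : π₂ ∈ {p : A → ℝ | (∀ a, 0 ≤ p a) ∧ ∑ a, p a = 1})
    (hmax : IsMaxOn (fun π => ∑ a, q₁ a * π a - Ω π)
      {p : A → ℝ | (∀ a, 0 ≤ p a) ∧ ∑ a, p a = 1} π₁) :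
    (∑ a, q₁ a * π₂ a - Ω π₂) + (ρ / 2) * (∑ a, |π₁ a - π₂ a|) ^ 2 ≤
      ∑ a, q₁ a * π₁ a - Ω π₁ := by
  set d2 : ℝ := (∑ a, |π₁ a - π₂ a|) ^ 2 with hd2
  have hd2nn : 0 ≤ d2 := sq_nonneg _
  have key : (∑ a, q₁ a * π₂ a - Ω π₂) - (∑ a, q₁ a * π₁ a - Ω π₁) + (ρ / 2) * d2 ≤ 0 := by
    apply stmt7_aux_nonpos (c := (ρ / 2) * d2) (by positivity)
    intro t ht0 ht1
    set πt : A → ℝ := t • π₂ + (1 - t) • π₁ with hπt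
    have hπtmem : πt ∈ {p : A → ℝ | (∀ a, 0 ≤ p a) ∧ ∑ a, p a = 1} := by
      constructor
      · intro a
        have := hπ₂.1 a
        have := hπ₁.1 a
        simp only [hπt, Pi.add_apply, Pi.smul_apply, smul_eq_mul]
        nlinarith
      · have : ∑ a, πt a = t * (∑ a, π₂ a) + (1 - t) * (∑ a, π₁ a) := by
          simp only [hπt, Pi.add_apply, Pi.smul_apply, smul_eq_mul]
          rw [Finset.mul_sum, Finset.mul_sum, ← Finset.sum_add_distrib]
        rw [this, hπ₂.2, hπ₁.2]; ring
    have hlin : ∑ a, q₁ a * πt a = t * (∑ a, q₁ a * π₂ a) + (1 - t) * (∑ a, q₁ a * π₁ a) := by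
      rw [Finset.mul_sum, Finset.mul_sum, ← Finset.sum_add_distrib]
      refine Finset.sum_congr rfl fun a _ => ?_
      simp only [hπt, Pi.add_apply, Pi.smul_apply, smul_eq_mul]
      ring
    have habs : (∑ a, |π₂ a - π₁ a|) = ∑ a, |π₁ a - π₂ a| :=
      Finset.sum_congr rfl fun a _ => abs_sub_comm _ _
    have hΩt := hΩ_sc π₂ π₁ hπ₂ hπ₁ t ⟨le_of_lt ht0, ht1⟩
    rw [habs, ← hd2] at hΩt
    have hmaxt := hmax hπtmem
    simp only [Set.mem_setOf_eq] at hmaxt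
    rw [hlin] at hmaxt
    -- hmaxt : t * S₂ + (1-t) * S₁ - Ω πt ≤ S₁ - Ω π₁
    -- hΩt : Ω πt ≤ t Ω π₂ + (1-t) Ω π₁ - (ρ/2) t (1-t) d2
    -- want: (S₂ - Ωπ₂) - (S₁ - Ωπ₁) + (ρ/2) d2 ≤ (ρ/2) d2 * t
    rw [← mul_le_mul_iff_of_pos_right ht0]
    nlinarith
  linarith
/-- Theorem 1, Lipschitz continuity of the optimality operator:
with `q_λ^s(a) = r(s,a,λ) + γ * ∑_{s'} (max_{a'} Q_λ*(s',a')) * P(s'|s,a)` and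
`Γ₁(s,λ) = argmax_{π ∈ Δ(A)} (∑_a q_λ^s(a) π(a) - Ω(π))` for `Ω` continuous and
ρ-strongly convex w.r.t. the ℓ¹ norm on `Δ(A)`,
`sup_s ‖Γ₁(s,λ₁) - Γ₁(s,λ₂)‖₁ ≤ (1/ρ)(L_r + γ L_r/(1-γ)) ‖λ₁ - λ₂‖₁`. -/
theorem stmt7 {S A : Type*} [Fintype S] [Fintype A] [Nonempty S] [Nonempty A]
    (P : S → A → S → ℝ)
    (hP : ∀ s a, (∀ s', 0 ≤ P s a s') ∧ ∑ s', P s a s' = 1)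
    (γ : ℝ) (hγ : γ ∈ Set.Ioo (0 : ℝ) 1)
    {H : ℕ} (hH : 1 ≤ H)
    (r : S → A → (Fin H → ℝ) → ℝ) (Lr : ℝ)
    (hr : ∀ s a (lam₁ lam₂ : Fin H → ℝ),
      |r s a lam₁ - r s a lam₂| ≤ Lr * ∑ h, |lam₁ h - lam₂ h|)
    (ρ : ℝ) (hρ : 0 < ρ)
    (Ω : (A → ℝ) → ℝ)
    (hΩ_cont : ContinuousOn Ω {p : A → ℝ | (∀ a, 0 ≤ p a) ∧ ∑ a, p a = 1})
    (hΩ_sc : ∀ π π' : A → ℝ,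
      π ∈ {p : A → ℝ | (∀ a, 0 ≤ p a) ∧ ∑ a, p a = 1} →
      π' ∈ {p : A → ℝ | (∀ a, 0 ≤ p a) ∧ ∑ a, p a = 1} →
      ∀ t ∈ Set.Icc (0 : ℝ) 1,
        Ω (t • π + (1 - t) • π') ≤
          t * Ω π + (1 - t) * Ω π' - (ρ / 2) * t * (1 - t) * (∑ a, |π a - π' a|) ^ 2)
    (Qstar : (Fin H → ℝ) → S → A → ℝ)
    (hQ : ∀ lam s a,
      Qstar lam s a = r s a lam + γ * ∑ s', P s a s' * (⨆ a', Qstar lam s' a'))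
    (q : (Fin H → ℝ) → S → A → ℝ)
    (hq : ∀ lam s a,
      q lam s a = r s a lam + γ * ∑ s', (⨆ a', Qstar lam s' a') * P s a s')
    (Γ₁ : S → (Fin H → ℝ) → A → ℝ)
    (hΓ₁ : ∀ s lam,
      Γ₁ s lam ∈ {p : A → ℝ | (∀ a, 0 ≤ p a) ∧ ∑ a, p a = 1} ∧
      IsMaxOn (fun π => ∑ a, q lam s a * π a - Ω π)
        {p : A → ℝ | (∀ a, 0 ≤ p a) ∧ ∑ a, p a = 1} (Γ₁ s lam)) :
    ∀ lam₁ lam₂ : Fin H → ℝ,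
      (⨆ s : S, ∑ a, |Γ₁ s lam₁ a - Γ₁ s lam₂ a|) ≤
        (1 / ρ) * (Lr + γ * Lr / (1 - γ)) * ∑ h, |lam₁ h - lam₂ h| := by
  obtain ⟨hγ0, hγ1⟩ := hγ
  have h1γ : (0 : ℝ) < 1 - γ := by linarith
  intro lam₁ lam₂
  by_cases hl : lam₁ = lam₂
  · subst hl
    simp [ciSup_const]
  · -- N > 0
    set N : ℝ := ∑ h, |lam₁ h - lam₂ h| with hNdef
    obtain ⟨h0, hh0⟩ := Function.ne_iff.mp hl
    have hN : 0 < N :=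
      Finset.sum_pos' (fun i _ => abs_nonneg _)
        ⟨h0, Finset.mem_univ _, abs_pos.mpr (sub_ne_zero.mpr hh0)⟩
    obtain ⟨s0⟩ := (inferInstance : Nonempty S)
    obtain ⟨a0⟩ := (inferInstance : Nonempty A)
    have hLr : 0 ≤ Lr := by
      have h1 := hr s0 a0 lam₁ lam₂
      have h2 : (0 : ℝ) ≤ |r s0 a0 lam₁ - r s0 a0 lam₂| := abs_nonneg _
      nlinarith
    -- Step A: bound on |Q₁ - Q₂|
    obtain ⟨p0, _, hp0⟩ := Finset.exists_max_image (Finset.univ : Finset (S × A))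
      (fun p => |Qstar lam₁ p.1 p.2 - Qstar lam₂ p.1 p.2|) Finset.univ_nonempty
    set M : ℝ := |Qstar lam₁ p0.1 p0.2 - Qstar lam₂ p0.1 p0.2| with hMdef
    have hMub : ∀ s a, |Qstar lam₁ s a - Qstar lam₂ s a| ≤ M :=
      fun s a => hp0 (s, a) (Finset.mem_univ _)
    have hMnn : 0 ≤ M := abs_nonneg _
    -- value function difference bound
    have hV : ∀ s' : S, |(⨆ a', Qstar lam₁ s' a') - (⨆ a', Qstar lam₂ s' a')| ≤ M := by
      intro s'
      rw [abs_sub_le_iff]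
      constructor
      · rw [sub_le_iff_le_add]
        apply ciSup_le
        intro a
        have h1 := hMub s' a
        have h2 : Qstar lam₂ s' a ≤ ⨆ a', Qstar lam₂ s' a' :=
          le_ciSup (Set.Finite.bddAbove (Set.finite_range _)) a
        have := abs_le.mp h1
        linarith [this.2]
      · rw [sub_le_iff_le_add]
        apply ciSup_le
        intro a
        have h1 := hMub s' a
        have h2 : Qstar lam₁ s' a ≤ ⨆ a', Qstar lam₁ s' a' :=
          le_ciSup (Set.Finite.bddAbove (Set.finite_range _)) a
        have := abs_le.mp h1
        linarith [(abs_le.mp h1).1]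
    -- fixed point contraction: (1-γ) M ≤ Lr N
    have hMcontr : (1 - γ) * M ≤ Lr * N := by
      obtain ⟨sm, am⟩ := p0
      have e1 := hQ lam₁ sm am
      have e2 := hQ lam₂ sm am
      have hsplit : Qstar lam₁ sm am - Qstar lam₂ sm am =
          (r sm am lam₁ - r sm am lam₂) +
          γ * ∑ s', P sm am s' *
            ((⨆ a', Qstar lam₁ s' a') - (⨆ a', Qstar lam₂ s' a')) := by
        rw [e1, e2]
        simp only [mul_sub]
        rw [Finset.sum_sub_distrib]
        ring
      have hsum : |∑ s', P sm am s' *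
            ((⨆ a', Qstar lam₁ s' a') - (⨆ a', Qstar lam₂ s' a'))| ≤ M := by
        calc |∑ s', P sm am s' *
              ((⨆ a', Qstar lam₁ s' a') - (⨆ a', Qstar lam₂ s' a'))|
            ≤ ∑ s', |P sm am s' *
              ((⨆ a', Qstar lam₁ s' a') - (⨆ a', Qstar lam₂ s' a'))| :=
              Finset.abs_sum_le_sum_abs _ _
          _ ≤ ∑ s', P sm am s' * M := by
              apply Finset.sum_le_sum
              intro s' _
              rw [abs_mul, abs_of_nonneg ((hP sm am).1 s')]
              exact mul_le_mul_of_nonneg_left (hV s') ((hP sm am).1 s')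
          _ = M := by rw [← Finset.sum_mul, (hP sm am).2, one_mul]
      have hb : |γ * ∑ s', P sm am s' *
            ((⨆ a', Qstar lam₁ s' a') - (⨆ a', Qstar lam₂ s' a'))| ≤ γ * M := by
        rw [abs_mul, abs_of_pos hγ0]
        exact mul_le_mul_of_nonneg_left hsum hγ0.le
      have hMeq : M = |Qstar lam₁ sm am - Qstar lam₂ sm am| := rfl
      have habs2 : M ≤ |r sm am lam₁ - r sm am lam₂| +
          |γ * ∑ s', P sm am s' *
            ((⨆ a', Qstar lam₁ s' a') - (⨆ a', Qstar lam₂ s' a'))| := by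
        rw [hMeq, hsplit]
        exact abs_add_le _ _
      have h1 := hr sm am lam₁ lam₂
      linarith
    -- Step B: q difference bound
    set K : ℝ := Lr * N + γ * M with hKdef
    have hqd : ∀ s a, |q lam₁ s a - q lam₂ s a| ≤ K := by
      intro s a
      have e1 := hq lam₁ s a
      have e2 := hq lam₂ s a
      have hsplit : q lam₁ s a - q lam₂ s a =
          (r s a lam₁ - r s a lam₂) +
          γ * ∑ s', ((⨆ a', Qstar lam₁ s' a') - (⨆ a', Qstar lam₂ s' a')) * P s a s' := by
        rw [e1, e2]
        simp only [sub_mul]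
        rw [Finset.sum_sub_distrib]
        ring
      have hsum : |∑ s', ((⨆ a', Qstar lam₁ s' a') - (⨆ a', Qstar lam₂ s' a')) * P s a s'|
          ≤ M := by
        calc |∑ s', ((⨆ a', Qstar lam₁ s' a') - (⨆ a', Qstar lam₂ s' a')) * P s a s'|
            ≤ ∑ s', |((⨆ a', Qstar lam₁ s' a') - (⨆ a', Qstar lam₂ s' a')) * P s a s'| :=
              Finset.abs_sum_le_sum_abs _ _
          _ ≤ ∑ s', M * P s a s' := by
              apply Finset.sum_le_sum
              intro s' _
              rw [abs_mul, abs_of_nonneg ((hP s a).1 s')]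
              exact mul_le_mul_of_nonneg_right (hV s') ((hP s a).1 s')
          _ = M := by rw [← Finset.mul_sum, (hP s a).2, mul_one]
      have hb : |γ * ∑ s', ((⨆ a', Qstar lam₁ s' a') - (⨆ a', Qstar lam₂ s' a')) * P s a s'|
          ≤ γ * M := by
        rw [abs_mul, abs_of_pos hγ0]
        exact mul_le_mul_of_nonneg_left hsum hγ0.le
      have habs2 : |q lam₁ s a - q lam₂ s a| ≤ |r s a lam₁ - r s a lam₂| +
          |γ * ∑ s', ((⨆ a', Qstar lam₁ s' a') - (⨆ a', Qstar lam₂ s' a')) * P s a s'| := by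
        rw [hsplit]
        exact abs_add_le _ _
      have h1 := hr s a lam₁ lam₂
      rw [hKdef]
      linarith
    -- Step C: per-state bound
    have hKle : K ≤ (Lr + γ * Lr / (1 - γ)) * N := by
      have hγM : γ * M ≤ γ * Lr / (1 - γ) * N := by
        rw [div_mul_eq_mul_div, le_div_iff₀ h1γ]
        nlinarith
      rw [hKdef]
      nlinarith
    have hRHSnn : 0 ≤ (1 / ρ) * (Lr + γ * Lr / (1 - γ)) * N := by
      have h1 : 0 ≤ γ * Lr / (1 - γ) := div_nonneg (mul_nonneg hγ0.le hLr) h1γ.le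
      have : 0 ≤ Lr + γ * Lr / (1 - γ) := by linarith
      positivity
    apply ciSup_le
    intro s
    set π₁ : A → ℝ := Γ₁ s lam₁ with hπ₁def
    set π₂ : A → ℝ := Γ₁ s lam₂ with hπ₂def
    set d : ℝ := ∑ a, |π₁ a - π₂ a| with hddef
    have hdnn : 0 ≤ d := Finset.sum_nonneg fun a _ => abs_nonneg _
    have key₁ := stmt7_sc hρ Ω hΩ_sc (q lam₁ s) π₁ π₂ (hΓ₁ s lam₁).1 (hΓ₁ s lam₂).1
      (hΓ₁ s lam₁).2
    have key₂ := stmt7_sc hρ Ω hΩ_sc (q lam₂ s) π₂ π₁ (hΓ₁ s lam₂).1 (hΓ₁ s lam₁).1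
      (hΓ₁ s lam₂).2
    have habs : (∑ a, |π₂ a - π₁ a|) = d :=
      Finset.sum_congr rfl fun a _ => abs_sub_comm _ _
    rw [habs] at key₂
    -- combine: ρ d² ≤ ∑ (q₁ - q₂)(π₁ - π₂)
    have hcross : ρ * d ^ 2 ≤ ∑ a, (q lam₁ s a - q lam₂ s a) * (π₁ a - π₂ a) := by
      have hsum : ∑ a, (q lam₁ s a - q lam₂ s a) * (π₁ a - π₂ a) =
          (∑ a, q lam₁ s a * π₁ a) - (∑ a, q lam₁ s a * π₂ a) -
          (∑ a, q lam₂ s a * π₁ a) + (∑ a, q lam₂ s a * π₂ a) := by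
        rw [← Finset.sum_sub_distrib, ← Finset.sum_sub_distrib, ← Finset.sum_add_distrib]
        exact Finset.sum_congr rfl fun a _ => by ring
      rw [hsum]
      linarith
    have hholder : ∑ a, (q lam₁ s a - q lam₂ s a) * (π₁ a - π₂ a) ≤ K * d := by
      calc ∑ a, (q lam₁ s a - q lam₂ s a) * (π₁ a - π₂ a)
          ≤ ∑ a, |(q lam₁ s a - q lam₂ s a) * (π₁ a - π₂ a)| :=
            Finset.sum_le_sum fun a _ => le_abs_self _
        _ ≤ ∑ a, K * |π₁ a - π₂ a| := by
            apply Finset.sum_le_sum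
            intro a _
            rw [abs_mul]
            exact mul_le_mul_of_nonneg_right (hqd s a) (abs_nonneg _)
        _ = K * d := by rw [← Finset.mul_sum]
    rcases eq_or_lt_of_le hdnn with hd0 | hd0
    · rw [← hd0]
      exact hRHSnn
    · have h1 : ρ * d ^ 2 ≤ (Lr + γ * Lr / (1 - γ)) * N * d := by
        calc ρ * d ^ 2 ≤ K * d := le_trans hcross hholder
          _ ≤ (Lr + γ * Lr / (1 - γ)) * N * d :=
              mul_le_mul_of_nonneg_right hKle hdnn
      have h2 : ρ * d ≤ (Lr + γ * Lr / (1 - γ)) * N := by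
        nlinarith
      rw [div_mul_eq_mul_div, div_mul_eq_mul_div, one_mul, le_div_iff₀ hρ]
      linarith [h2]
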